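/- The image of the Artin–Schreier defect D : K → {fractional ideals of O} ∪ {(0)} is exactly the set S = {(0), O} ∪ {(π^{−2t+1}) : t > 0}. In particular, D(a) is never of the form (π^{−2t}) with t > 0 and never (π^s) with s > 0. -/

import Mathlib

noncomputable section

/-- The finite field with `2 ^ τ` elements. -/
abbrev Fq (τ : ℕ) := GaloisField 2 τ

/-- The field of formal Laurent series `K = F_{2^τ}((π))`. -/
abbrev Kk (τ : ℕ) := LaurentSeries (Fq τ)

/-- The ring of integers `O = F_{2^τ}[[π]]`. -/
abbrev Ok (τ : ℕ) := PowerSeries (Fq τ)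

/-- The Artin–Schreier defect `D(a) = ⋂_{h ∈ K} (h² + h + a)`, an intersection of
principal fractional `O`-ideals (as `O`-submodules of `K`). -/
def ASdefect (τ : ℕ) (a : Kk τ) : Submodule (Ok τ) (Kk τ) :=
  ⨅ h : Kk τ, Submodule.span (Ok τ) {h ^ 2 + h + a}

/-- The uniformizer `π` of `K`, viewed as a Laurent series. -/
def pp (τ : ℕ) : Kk τ := algebraMap (Ok τ) (Kk τ) PowerSeries.X

namespace ASaux

variable {τ : ℕ}

instance : CharP (Ok τ) 2 :=
  charP_of_injective_ringHom (f := PowerSeries.C (R := Fq τ))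
    (fun a b h => by simpa using congrArg (PowerSeries.constantCoeff (R := Fq τ)) h) 2

instance : CharP (Kk τ) 2 :=
  charP_of_injective_ringHom (HahnSeries.ofPowerSeries_injective (Γ := ℤ) (R := Fq τ)) 2

/-- A Laurent series with vanishing negative coefficients comes from a power series. -/
lemma ofPS_mk_eq {y : Kk τ} (hy : ∀ k < (0:ℤ), y.coeff k = 0) :
    HahnSeries.ofPowerSeries ℤ (Fq τ) (PowerSeries.mk fun n => y.coeff n) = y := by
  ext k
  rw [PowerSeries.coeff_coe]
  split_ifs with h
  · exact (hy k h).symm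
  · rw [PowerSeries.coeff_mk]
    congr 1
    omega

lemma exists_ps {y : Kk τ} (hy : ∀ k < (0:ℤ), y.coeff k = 0) :
    ∃ B : Ok τ, HahnSeries.ofPowerSeries ℤ (Fq τ) B = y :=
  ⟨_, ofPS_mk_eq hy⟩

lemma mem_span_single_iff {m : ℤ} {y : Kk τ} :
    y ∈ Submodule.span (Ok τ) {(HahnSeries.single m 1 : Kk τ)} ↔ ∀ k < m, y.coeff k = 0 := by
  rw [Submodule.mem_span_singleton]
  constructor
  · rintro ⟨c, rfl⟩ k hk
    rw [Algebra.smul_def, LaurentSeries.coe_algebraMap]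
    have h2 := HahnSeries.coeff_mul_single_add
      (r := (1 : Fq τ)) (x := HahnSeries.ofPowerSeries ℤ (Fq τ) c) (a := k - m) (b := m)
    rw [sub_add_cancel] at h2
    rw [h2, PowerSeries.coeff_coe, if_pos (by omega), zero_mul]
  · intro hy
    obtain ⟨B, hB⟩ := exists_ps (y := y * HahnSeries.single (-m) 1) (by
      intro j hj
      have h2 := HahnSeries.coeff_mul_single_add
        (r := (1 : Fq τ)) (x := y) (a := j + m) (b := -m)
      rw [add_neg_cancel_right] at h2
      rw [h2, hy (j + m) (by omega), zero_mul])
    refine ⟨B, ?_⟩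
    rw [Algebra.smul_def, LaurentSeries.coe_algebraMap, hB, mul_assoc,
      HahnSeries.single_mul_single, neg_add_cancel, one_mul, HahnSeries.single_zero_one, mul_one]

lemma span_single_of_order {f : Kk τ} (hf : f ≠ 0) :
    Submodule.span (Ok τ) {f} = Submodule.span (Ok τ) {(HahnSeries.single f.order 1 : Kk τ)} := by
  apply le_antisymm
  · rw [Submodule.span_singleton_le_iff_mem, mem_span_single_iff]
    exact fun k hk => HahnSeries.coeff_eq_zero_of_lt_order hk
  · rw [Submodule.span_singleton_le_iff_mem, Submodule.mem_span_singleton]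
    set cL : Kk τ := HahnSeries.single f.order 1 * f⁻¹ with hcL
    have hsne : (HahnSeries.single f.order 1 : Kk τ) ≠ 0 :=
      HahnSeries.single_ne_zero one_ne_zero
    have hcLf : cL * f = HahnSeries.single f.order 1 := by
      rw [hcL, mul_assoc, inv_mul_cancel₀ hf, mul_one]
    have hcLne : cL ≠ 0 := by
      intro h; rw [h, zero_mul] at hcLf; exact hsne hcLf.symm
    have hord : cL.order = 0 := by
      have := HahnSeries.order_mul hcLne hf
      rw [hcLf, HahnSeries.order_single one_ne_zero] at this
      omega
    obtain ⟨B, hB⟩ := exists_ps (y := cL) (by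
      intro k hk
      apply HahnSeries.coeff_eq_zero_of_lt_order
      omega)
    exact ⟨B, by rw [Algebra.smul_def, LaurentSeries.coe_algebraMap, hB, hcLf]⟩

lemma mem_span_iff {f y : Kk τ} (hf : f ≠ 0) :
    y ∈ Submodule.span (Ok τ) {f} ↔ ∀ k < f.order, y.coeff k = 0 := by
  rw [span_single_of_order hf, mem_span_single_iff]

lemma ps_sq_coeff {R : Type*} [CommRing R] [CharP R 2] (f : PowerSeries R) (n : ℕ) :
    PowerSeries.coeff n (f ^ 2) =
      if 2 ∣ n then (PowerSeries.coeff (n / 2) f) ^ 2 else 0 := by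
  rw [sq, PowerSeries.coeff_mul]
  rw [← Finset.sum_filter_add_sum_filter_not (Finset.HasAntidiagonal.antidiagonal n) (fun p => p.1 = p.2)]
  have hoff : ∑ p ∈ (Finset.HasAntidiagonal.antidiagonal n).filter (fun p => ¬ p.1 = p.2),
      PowerSeries.coeff p.1 f * PowerSeries.coeff p.2 f = 0 := by
    apply Finset.sum_involution (fun p _ => (p.2, p.1))
    · intro a _
      simp only [mul_comm]
      exact CharTwo.add_self_eq_zero _
    · intro a ha _ h
      simp only [Finset.mem_filter] at ha
      exact ha.2 (congrArg Prod.fst h).symm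
    · intro a ha
      simp only [Finset.mem_filter, Finset.HasAntidiagonal.mem_antidiagonal] at ha ⊢
      omega
    · intro a _; rfl
  rw [hoff, add_zero]
  have hdiag : (Finset.HasAntidiagonal.antidiagonal n).filter (fun p => p.1 = p.2) =
      if 2 ∣ n then {(n / 2, n / 2)} else ∅ := by
    split_ifs with h
    · ext p
      simp only [Finset.mem_filter, Finset.HasAntidiagonal.mem_antidiagonal, Finset.mem_singleton, Prod.ext_iff]
      omega
    · ext p
      simp only [Finset.mem_filter, Finset.HasAntidiagonal.mem_antidiagonal, Finset.notMem_empty, iff_false,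
        not_and]
      omega
  rw [hdiag]
  split_ifs with h
  · rw [Finset.sum_singleton, sq]
  · rw [Finset.sum_empty]

/-- Coefficients of a solution of the Artin–Schreier equation `G² + G = B`. -/
private def asu (B : Ok τ) : ℕ → Fq τ
  | 0 => 0
  | (n+1) =>
      PowerSeries.coeff (n+1) B +
        (if 2 ∣ (n+1) then asu B ((n+1)/2) ^ 2 else 0)
  decreasing_by exact Nat.div_lt_self (Nat.succ_pos n) one_lt_two

lemma as_solve_ps (B : Ok τ) (hB : PowerSeries.coeff 0 B = 0) :
    ∃ G : Ok τ, G ^ 2 + G = B := by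
  refine ⟨PowerSeries.mk (asu B), ?_⟩
  ext n
  rw [map_add, ps_sq_coeff]
  simp only [PowerSeries.coeff_mk]
  match n with
  | 0 => simp [asu, hB]
  | (n+1) =>
    rw [show asu B (n+1) = PowerSeries.coeff (n+1) B +
        (if 2 ∣ (n+1) then asu B ((n+1)/2) ^ 2 else 0) from by rw [asu]]
    split_ifs with h
    · generalize asu B ((n+1)/2) ^ 2 = x
      generalize PowerSeries.coeff (n+1) B = c
      rw [← add_assoc, add_comm x c, add_assoc, CharTwo.add_self_eq_zero, add_zero]
    · rw [zero_add, add_zero]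

/-- Solvability of the Artin–Schreier equation for elements of positive valuation. -/
lemma as_solve {b : Kk τ} (hb : ∀ k < (1:ℤ), b.coeff k = 0) :
    ∃ g : Kk τ, g ^ 2 + g = b := by
  set B : Ok τ := PowerSeries.mk fun n => b.coeff n with hBdef
  have hB : HahnSeries.ofPowerSeries ℤ (Fq τ) B = b :=
    ofPS_mk_eq (fun k hk => hb k (by omega))
  obtain ⟨G, hG⟩ := as_solve_ps B (by
    rw [hBdef, PowerSeries.coeff_mk]
    exact hb 0 one_pos)
  refine ⟨HahnSeries.ofPowerSeries ℤ (Fq τ) G, ?_⟩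
  rw [← map_pow, ← map_add, hG, hB]

lemma ne_and_order_le {x : Kk τ} {k : ℤ} (hk : x.coeff k ≠ 0) : x ≠ 0 ∧ x.order ≤ k :=
  ⟨fun h => hk (by rw [h, HahnSeries.coeff_zero]),
    HahnSeries.order_le_of_coeff_ne_zero hk⟩

/-- Squares of coefficients: surjectivity of the Frobenius on `F_q`. -/
lemma sq_surj (c : Fq τ) : ∃ r : Fq τ, r ^ 2 = c := by
  have hinj : Function.Injective (fun x : Fq τ => x ^ 2) := by
    intro x y h
    exact frobenius_inj (Fq τ) 2 (by simpa [frobenius_def] using h)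
  exact Finite.surjective_of_injective hinj c

/-- The Artin–Schreier map is not surjective on `F_q`. -/
lemma as_not_surj : ∃ c₀ : Fq τ, ∀ x : Fq τ, x ^ 2 + x ≠ c₀ := by
  have hns : ¬ Function.Surjective (fun x : Fq τ => x ^ 2 + x) := by
    intro hs
    have hinj := Finite.injective_iff_surjective.mpr hs
    have h01 : (fun x : Fq τ => x ^ 2 + x) 0 = (fun x : Fq τ => x ^ 2 + x) 1 := by
      simp [CharTwo.add_self_eq_zero]
    exact one_ne_zero (hinj h01).symm
  rw [Function.Surjective] at hns
  push_neg at hns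
  exact hns

/-- Multiplicativity of leading coefficients, specialized. -/
lemma sq_lead_coeff {h : Kk τ} (hh : h ≠ 0) :
    (h ^ 2).coeff (2 * h.order) = h.coeff h.order * h.coeff h.order := by
  have h1 := HahnSeries.coeff_mul_order_add_order h h
  rw [HahnSeries.leadingCoeff_eq] at h1
  rw [sq, show 2 * h.order = h.order + h.order by ring, h1]

lemma pp_eq_single : pp τ = (HahnSeries.single (1:ℤ) 1 : Kk τ) := by
  show algebraMap (Ok τ) (Kk τ) PowerSeries.X = _
  rw [LaurentSeries.coe_algebraMap]
  exact HahnSeries.ofPowerSeries_X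

lemma pp_zpow (m : ℤ) : pp τ ^ m = (HahnSeries.single m 1 : Kk τ) := by
  rw [pp_eq_single, ← RatFunc.single_zpow]

end ASaux

open ASaux HahnSeries

/-- the image of the Artin–Schreier defect is exactly
`S = {(0), O} ∪ {(π^{-2t+1}) : t > 0}`. -/
theorem ASdefect_range (τ : ℕ) (hτ : 0 < τ) :
    Set.range (ASdefect τ) =
      {I : Submodule (Ok τ) (Kk τ) |
        I = ⊥ ∨ I = Submodule.span (Ok τ) {(1 : Kk τ)} ∨
          ∃ t : ℕ, 0 < t ∧ I = Submodule.span (Ok τ) {pp τ ^ (-2 * (t : ℤ) + 1)}} := by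
  ext I
  simp only [Set.mem_range, Set.mem_setOf_eq]
  constructor
  · rintro ⟨a, rfl⟩
    by_cases hz : ∃ h : Kk τ, h ^ 2 + h + a = 0
    · left
      apply le_bot_iff.mp
      obtain ⟨h, hh⟩ := hz
      refine le_trans (iInf_le _ h) ?_
      rw [hh, Submodule.span_zero_singleton]
    · push_neg at hz
      have ordle : ∀ h : Kk τ, (h ^ 2 + h + a).order ≤ 0 := by
        intro h
        by_contra hlt
        push_neg at hlt
        obtain ⟨g, hg⟩ := as_solve (b := h ^ 2 + h + a)
          (fun k hk => HahnSeries.coeff_eq_zero_of_lt_order (by omega))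
        refine hz (h + g) ?_
        have hexp : (h + g) ^ 2 + (h + g) + a = (h ^ 2 + h + a) + (g ^ 2 + g) := by
          rw [CharTwo.add_sq]; ring
        rw [hexp, hg, CharTwo.add_self_eq_zero]
      obtain ⟨M, ⟨h₀, hh₀⟩, hmax⟩ :=
        Int.exists_greatest_of_bdd (P := fun n => ∃ h : Kk τ, (h ^ 2 + h + a).order = n)
          ⟨0, fun z ⟨h, hh⟩ => hh ▸ ordle h⟩ ⟨_, 0, rfl⟩
      have hM0 : M ≤ 0 := hh₀ ▸ ordle h₀
      have hD : ASdefect τ a = Submodule.span (Ok τ) {(HahnSeries.single M 1 : Kk τ)} := by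
        apply le_antisymm
        · refine le_trans (iInf_le _ h₀) ?_
          rw [span_single_of_order (hz h₀), hh₀]
        · refine le_iInf fun h => ?_
          rw [Submodule.span_singleton_le_iff_mem, mem_span_iff (hz h)]
          intro k hk
          have hle : (h ^ 2 + h + a).order ≤ M := hmax _ ⟨h, rfl⟩
          exact HahnSeries.coeff_single_of_ne (by omega)
      have hModd : M = 0 ∨ ¬ (2 ∣ M) := by
        by_contra hcon
        push_neg at hcon
        obtain ⟨hMne, m, hm⟩ := hcon
        set b := h₀ ^ 2 + h₀ + a with hbdef
        have hbne : b ≠ 0 := hz h₀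
        clear_value b
        have hbord : b.order = M := hh₀
        have hc : b.coeff M ≠ 0 := by
          rw [← hbord]; exact (HahnSeries.coeff_order_eq_zero.not.mpr hbne)
        obtain ⟨r, hr⟩ := sq_surj (b.coeff M)
        have hMneg : M < 0 := lt_of_le_of_ne hM0 hMne
        have hmlt : M < m := by omega
        set g := (HahnSeries.single m r : Kk τ) with hgdef
        have h2m : (2 : ℕ) • m = M := by rw [two_nsmul]; omega
        have hg2 : g ^ 2 = HahnSeries.single M (b.coeff M) := by
          rw [hgdef, HahnSeries.single_pow, hr, h2m]
        have himp : ∀ k < M + 1, ((h₀ + g) ^ 2 + (h₀ + g) + a).coeff k = 0 := by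
          intro k hk
          have hexp : (h₀ + g) ^ 2 + (h₀ + g) + a = b + (g ^ 2 + g) := by
            rw [CharTwo.add_sq, hbdef]; ring
          rw [hexp, hg2, HahnSeries.coeff_add, HahnSeries.coeff_add]
          rcases eq_or_lt_of_le (Int.lt_add_one_iff.mp hk) with heq | hlt
          · rw [heq, HahnSeries.coeff_single_same,
              HahnSeries.coeff_single_of_ne (show M ≠ m by omega), add_zero,
              CharTwo.add_self_eq_zero]
          · rw [HahnSeries.coeff_eq_zero_of_lt_order (by omega),
              HahnSeries.coeff_single_of_ne (show k ≠ M by omega),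
              HahnSeries.coeff_single_of_ne (show k ≠ m by omega)]
            simp
        have hne' : (h₀ + g) ^ 2 + (h₀ + g) + a ≠ 0 := hz _
        have hordgt : M < ((h₀ + g) ^ 2 + (h₀ + g) + a).order := by
          by_contra hle
          push_neg at hle
          exact (HahnSeries.coeff_order_eq_zero.not.mpr hne') (himp _ (by omega))
        exact absurd (hmax _ ⟨h₀ + g, rfl⟩) (by omega)
      rcases hModd with hM | hM
      · right; left
        rw [hD, hM, HahnSeries.single_zero_one]
      · right; right
        have hMneg : M < 0 := by
          rcases lt_or_eq_of_le hM0 with h | h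
          · exact h
          · exact absurd h.symm (by omega)
        refine ⟨((1 - M) / 2).toNat, by omega, ?_⟩
        have hexp : -2 * ((((1 - M) / 2).toNat : ℕ) : ℤ) + 1 = M := by omega
        rw [hD, hexp, pp_zpow]
  · rintro (rfl | rfl | ⟨t, ht, rfl⟩)
    · refine ⟨0, le_bot_iff.mp (le_trans (iInf_le _ 0) ?_)⟩
      rw [show (0 : Kk τ) ^ 2 + 0 + 0 = 0 by ring, Submodule.span_zero_singleton]
    · obtain ⟨c₀, hc₀⟩ := as_not_surj (τ := τ)
      have hc₀0 : c₀ ≠ 0 := fun h => hc₀ 0 (by simp [h])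
      set a := (HahnSeries.single (0:ℤ) c₀ : Kk τ) with hadef
      have hane : a ≠ 0 := HahnSeries.single_ne_zero hc₀0
      have key : ∀ h : Kk τ, (h ^ 2 + h + a) ≠ 0 ∧ (h ^ 2 + h + a).order ≤ 0 := by
        intro h
        by_cases h0 : h = 0
        · subst h0
          refine ne_and_order_le (k := 0) ?_
          rw [show (0 : Kk τ) ^ 2 + 0 + a = a by ring, hadef, HahnSeries.coeff_single_same]
          exact hc₀0
        · rcases lt_or_ge h.order 0 with ho | ho
          · have h2 : ((h ^ 2 + h + a)).coeff (2 * h.order) ≠ 0 := by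
              have e2 : h.coeff (2 * h.order) = 0 :=
                HahnSeries.coeff_eq_zero_of_lt_order (by omega)
              have e3 : a.coeff (2 * h.order) = 0 := by
                rw [hadef]
                exact HahnSeries.coeff_single_of_ne (by omega)
              rw [HahnSeries.coeff_add, HahnSeries.coeff_add, e2, e3, sq_lead_coeff h0,
                add_zero, add_zero]
              exact mul_ne_zero (HahnSeries.coeff_order_eq_zero.not.mpr h0)
                (HahnSeries.coeff_order_eq_zero.not.mpr h0)
            have := ne_and_order_le h2
            exact ⟨this.1, le_trans this.2 (by omega)⟩
          · refine ne_and_order_le (k := 0) ?_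
            have hsq0 : (h ^ 2).coeff 0 = h.coeff 0 * h.coeff 0 := by
              rcases lt_or_eq_of_le ho with ho' | ho'
              · rw [HahnSeries.coeff_eq_zero_of_lt_order (x := h ^ 2) (by
                    rw [sq, HahnSeries.order_mul h0 h0]; omega),
                  HahnSeries.coeff_eq_zero_of_lt_order (by omega), mul_zero]
              · have := sq_lead_coeff h0
                rw [← ho'] at this
                simpa using this
            rw [HahnSeries.coeff_add, HahnSeries.coeff_add, hsq0, hadef,
              HahnSeries.coeff_single_same]
            intro heq
            refine hc₀ (h.coeff 0) ?_
            have := add_eq_zero_iff_eq_neg.mp heq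
            rw [CharTwo.neg_eq] at this
            rw [← this]; ring
      refine ⟨a, le_antisymm ?_ ?_⟩
      · refine le_trans (iInf_le _ 0) ?_
        rw [show (0 : Kk τ) ^ 2 + 0 + a = a by ring, span_single_of_order hane, hadef,
          HahnSeries.order_single hc₀0, HahnSeries.single_zero_one]
      · refine le_iInf fun h => ?_
        rw [Submodule.span_singleton_le_iff_mem, mem_span_iff (key h).1]
        intro k hk
        have := (key h).2
        rw [← HahnSeries.single_zero_one]
        exact HahnSeries.coeff_single_of_ne (by omega)
    · set m : ℤ := -2 * (t : ℤ) + 1 with hmdef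
      have hmneg : m < 0 := by omega
      have hmodd : ¬ (2 ∣ m) := by omega
      set a := (HahnSeries.single m 1 : Kk τ) with hadef
      have hane : a ≠ 0 := HahnSeries.single_ne_zero one_ne_zero
      have key : ∀ h : Kk τ, (h ^ 2 + h + a) ≠ 0 ∧ (h ^ 2 + h + a).order ≤ m := by
        intro h
        by_cases h0 : h = 0
        · subst h0
          refine ne_and_order_le (k := m) ?_
          rw [show (0 : Kk τ) ^ 2 + 0 + a = a by ring, hadef, HahnSeries.coeff_single_same]
          exact one_ne_zero
        · rcases lt_trichotomy (2 * h.order) m with ho | ho | ho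
          · have honeg : h.order < 0 := by omega
            have h2 : ((h ^ 2 + h + a)).coeff (2 * h.order) ≠ 0 := by
              have e2 : h.coeff (2 * h.order) = 0 :=
                HahnSeries.coeff_eq_zero_of_lt_order (by omega)
              have e3 : a.coeff (2 * h.order) = 0 := by
                rw [hadef]
                exact HahnSeries.coeff_single_of_ne (by omega)
              rw [HahnSeries.coeff_add, HahnSeries.coeff_add, e2, e3, sq_lead_coeff h0,
                add_zero, add_zero]
              exact mul_ne_zero (HahnSeries.coeff_order_eq_zero.not.mpr h0)
                (HahnSeries.coeff_order_eq_zero.not.mpr h0)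
            have := ne_and_order_le h2
            exact ⟨this.1, le_trans this.2 (by omega)⟩
          · exact absurd ho (by omega)
          · have hom : m < h.order := by
              by_contra hle
              push_neg at hle
              omega
            refine ne_and_order_le (k := m) ?_
            rw [HahnSeries.coeff_add, HahnSeries.coeff_add,
              HahnSeries.coeff_eq_zero_of_lt_order (x := h ^ 2) (by
                rw [sq, HahnSeries.order_mul h0 h0]; omega),
              HahnSeries.coeff_eq_zero_of_lt_order (by omega), hadef,
              HahnSeries.coeff_single_same]
            simp
      refine ⟨a, le_antisymm ?_ ?_⟩
      · refine le_trans (iInf_le _ 0) ?_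
        rw [show (0 : Kk τ) ^ 2 + 0 + a = a by ring, hadef, pp_zpow]
      · refine le_iInf fun h => ?_
        rw [Submodule.span_singleton_le_iff_mem, mem_span_iff (key h).1]
        intro k hk
        have := (key h).2
        rw [pp_zpow]
        exact HahnSeries.coeff_single_of_ne (by omega)
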